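/- The global sections functor is left adjoint to the Yoneda embedding into Poly: for a polynomial functor P = ∐_{i ∈ I} Fin(pᵢ, –) and any finite set k, the set of natural transformations P ⟶ Fin(k, –) is in bijection, naturally in P and k, with the set of functions k → ∏_{i ∈ I} pᵢ. -/

import Mathlib

/- STATEMENT 19: The global sections functor is left adjoint to the Yoneda embedding into
`Poly`: for a polynomial functor `P = ∐_{i ∈ I} Fin(pᵢ, –)` and any finite set `k`, the set
of natural transformations `P ⟶ Fin(k, –)` is in bijection, naturally in `P` and `k`, with
the set of functions `k → ∏_{i ∈ I} pᵢ`.  We state this as: there is a functor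
`Γ : Poly ⥤ FintypeCatᵒᵖ` with `Γ(∐ᵢ Fin(pᵢ, –)) ≅ ∏ᵢ pᵢ`, and a functor
`Y : FintypeCatᵒᵖ ⥤ Poly` with `Y(k) ≅ Fin(k, –)`, together with an adjunction `Γ ⊣ Y`
(whose hom-set bijections, natural in `P` and `k`, are exactly
`(P ⟶ Fin(k, –)) ≃ (k ⟶ ∏ᵢ pᵢ)`). -/

open CategoryTheory CategoryTheory.Limits Opposite

noncomputable section

noncomputable instance (X Y : FintypeCat.{0}) : Fintype (X ⟶ Y) := by
  classical exact Fintype.ofFinite (X ⟶ Y)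

/-- The finite coproduct `∐ᵢ Fin(kᵢ, –)` of corepresentable functors `FintypeCat ⥤ FintypeCat`. -/
def polySum {I : Type} [Fintype I] (k : I → FintypeCat.{0}) :
    FintypeCat.{0} ⥤ FintypeCat.{0} where
  obj X := FintypeCat.of (Σ i, (k i ⟶ X))
  map f := FintypeCat.homMk fun x => ⟨x.1, x.2 ≫ f⟩
  map_id X := FintypeCat.hom_ext _ _ fun _ => rfl
  map_comp f g := FintypeCat.hom_ext _ _ fun _ => rfl

/-- A polynomial functor is a finite coproduct of corepresentables. -/
def IsPolynomial (P : FintypeCat.{0} ⥤ FintypeCat.{0}) : Prop :=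
  ∃ (I : Type) (_ : Fintype I) (k : I → FintypeCat.{0}), Nonempty (P ≅ polySum k)

/-- The category of polynomial functors. -/
abbrev PolyCat := ObjectProperty.FullSubcategory IsPolynomial

/-- The cartesian product `∏ᵢ pᵢ` of a finite family of finite sets, as a finite set. -/
noncomputable def piFin {I : Type} [Fintype I] (p : I → FintypeCat.{0}) : FintypeCat.{0} :=
  letI : DecidableEq I := Classical.decEq I
  FintypeCat.of (∀ i, p i)

-- core equivalences
def sumUnitEquiv {I : Type} [Fintype I] (p : I → FintypeCat.{0}) :
    (polySum p ⟶ 𝟭 FintypeCat.{0}) ≃ ∀ i, p i where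
  toFun α i := α.app (p i) (show Σ j, (p j ⟶ p i) from ⟨i, 𝟙 (p i)⟩)
  invFun v :=
    { app := fun X => FintypeCat.homMk fun (x : Σ i, (p i ⟶ X)) => x.2 (v x.1)
      naturality := by intro X Y f; apply FintypeCat.hom_ext; intro x; rfl }
  left_inv α := by
    apply NatTrans.ext; funext X; apply FintypeCat.hom_ext; intro x
    obtain ⟨i, g⟩ := (show Σ i, (p i ⟶ X) from x)
    have h := ConcreteCategory.congr_hom (α.naturality g) (show Σ j, (p j ⟶ p i) from ⟨i, 𝟙 (p i)⟩)
    simp only [FintypeCat.comp_apply, Functor.id_map] at h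
    simp only [polySum, FintypeCat.homMk_apply, Category.id_comp] at h
    exact h.symm
  right_inv v := by
    funext i
    rfl


lemma unitHomFinite (P : PolyCat) : Finite (P.obj ⟶ 𝟭 FintypeCat.{0}) := by
  obtain ⟨I, hI, p, ⟨e⟩⟩ := P.property
  haveI : Finite I := Finite.intro hI.equivFin
  exact Finite.of_equiv (∀ i, p i) ((Iso.homCongr e (Iso.refl (𝟭 FintypeCat))).trans
    (@sumUnitEquiv I hI p)).symm

instance (P : PolyCat) : Finite (P.obj ⟶ 𝟭 FintypeCat.{0}) := unitHomFinite P

noncomputable def GammaObj (P : PolyCat) : FintypeCat.{0} :=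
  haveI : Fintype (Shrink.{0} (P.obj ⟶ 𝟭 FintypeCat.{0})) := Fintype.ofFinite _
  FintypeCat.of (Shrink.{0} (P.obj ⟶ 𝟭 FintypeCat.{0}))

def GammaEquiv (P : PolyCat) : (GammaObj P : Type) ≃ (P.obj ⟶ 𝟭 FintypeCat.{0}) :=
  (equivShrink _).symm

noncomputable def Gfunc : PolyCat ⥤ FintypeCat.{0}ᵒᵖ where
  obj P := op (GammaObj P)
  map {P Q} f := Quiver.Hom.op (show GammaObj Q ⟶ GammaObj P from
    FintypeCat.homMk fun α => (GammaEquiv P).symm (f.hom ≫ GammaEquiv Q α))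
  map_id P := by
    apply Quiver.Hom.unop_inj
    apply FintypeCat.hom_ext; intro α
    show (GammaEquiv P).symm (𝟙 P.obj ≫ GammaEquiv P α) = α
    rw [Category.id_comp]
    exact (GammaEquiv P).symm_apply_apply α
  map_comp {P Q R} f g := by
    apply Quiver.Hom.unop_inj
    apply FintypeCat.hom_ext; intro α
    show (GammaEquiv P).symm ((f.hom ≫ g.hom) ≫ GammaEquiv R α)
      = (GammaEquiv P).symm (f.hom ≫ GammaEquiv Q ((GammaEquiv Q).symm (g.hom ≫ GammaEquiv R α)))
    rw [Equiv.apply_symm_apply, Category.assoc]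

def YObj (k : FintypeCat.{0}) : PolyCat :=
  ⟨polySum (fun _ : PUnit => k), PUnit, inferInstance, (fun _ => k), ⟨Iso.refl _⟩⟩

noncomputable def Yfunc : FintypeCat.{0}ᵒᵖ ⥤ PolyCat where
  obj k := YObj k.unop
  map {k k'} f :=
    { hom :=
        { app := fun X => FintypeCat.homMk fun (x : Σ _ : PUnit, (k.unop ⟶ X)) =>
            (show Σ _ : PUnit, (k'.unop ⟶ X) from ⟨x.1, f.unop ≫ x.2⟩)
          naturality := by intro X Y g; apply FintypeCat.hom_ext; intro x; rfl } }
  map_id k := by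
    apply ObjectProperty.hom_ext; apply NatTrans.ext
    funext X; apply FintypeCat.hom_ext; intro x
    obtain ⟨u, g⟩ := (show Σ _ : PUnit, (k.unop ⟶ X) from x)
    exact congrArg (Sigma.mk u) (Category.id_comp g)
  map_comp {a b c} f g := by
    apply ObjectProperty.hom_ext; apply NatTrans.ext
    funext X; apply FintypeCat.hom_ext; intro x
    obtain ⟨u, h⟩ := (show Σ _ : PUnit, (a.unop ⟶ X) from x)
    exact congrArg (Sigma.mk u) (Category.assoc g.unop f.unop h).symm

def coreEquiv (P : FintypeCat.{0} ⥤ FintypeCat.{0}) (k : FintypeCat.{0}) :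
    (k → (P ⟶ 𝟭 FintypeCat.{0})) ≃ (P ⟶ polySum (fun _ : PUnit => k)) where
  toFun β :=
    { app := fun X => FintypeCat.homMk fun x =>
          (show Σ _ : PUnit, (k ⟶ X) from ⟨PUnit.unit, FintypeCat.homMk fun c => (β c).app X x⟩)
      naturality := by
        intro X Y f
        apply FintypeCat.hom_ext; intro x
        have h : ∀ c : k, (β c).app Y (P.map f x) = f ((β c).app X x) := by
          intro c
          have := ConcreteCategory.congr_hom ((β c).naturality f) x
          simpa using this
        exact congrArg (Sigma.mk PUnit.unit) (FintypeCat.hom_ext _ _ fun c => (h c)) }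
  invFun α c :=
    { app := fun X => FintypeCat.homMk fun x => (show Σ _ : PUnit, (k ⟶ X) from α.app X x).2 c
      naturality := by
        intro X Y f
        apply FintypeCat.hom_ext; intro x
        have h := ConcreteCategory.congr_hom (α.naturality f) x
        simp only [FintypeCat.comp_apply, Functor.id_map, FintypeCat.homMk_apply] at h ⊢
        rw [h]
        rfl }
  left_inv β := by funext c; apply NatTrans.ext; funext X; apply FintypeCat.hom_ext; intro x; rfl
  right_inv α := by
    apply NatTrans.ext; funext X; apply FintypeCat.hom_ext; intro x
    exact Sigma.ext rfl (heq_of_eq (FintypeCat.hom_ext _ _ fun c => rfl))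

noncomputable def fullEquiv (P : PolyCat) (k : FintypeCat.{0}ᵒᵖ) :
    (Gfunc.obj P ⟶ k) ≃ (P ⟶ Yfunc.obj k) :=
  ((opEquiv (Gfunc.obj P) k).trans ((InducedCategory.homEquiv.trans TypeCat.homEquiv).trans
    ((Equiv.arrowCongr (Equiv.refl (k.unop : Type)) (GammaEquiv P)).trans
      ((coreEquiv P.obj k.unop).trans
        (show (P.obj ⟶ (Yfunc.obj k).obj) ≃ (P ⟶ Yfunc.obj k) from
          { toFun := ObjectProperty.homMk, invFun := fun f => f.hom,
            left_inv := fun _ => rfl, right_inv := fun _ => rfl })))))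

noncomputable def adj : Gfunc ⊣ Yfunc :=
  Adjunction.mkOfHomEquiv
    { homEquiv := fullEquiv
      homEquiv_naturality_left_symm := by
        intro P P' k f g
        apply Quiver.Hom.unop_inj
        apply FintypeCat.hom_ext; intro c
        show (GammaEquiv P).symm ((coreEquiv P.obj k.unop).symm (f ≫ g).hom c)
          = (GammaEquiv P).symm (f.hom ≫
              GammaEquiv P' ((GammaEquiv P').symm ((coreEquiv P'.obj k.unop).symm g.hom c)))
        rw [Equiv.apply_symm_apply]
        rfl
      homEquiv_naturality_right := by
        intro P k k' f g
        rfl }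

theorem globalSections_adjoint_yoneda :
    ∃ (G : PolyCat ⥤ FintypeCat.{0}ᵒᵖ) (Y : FintypeCat.{0}ᵒᵖ ⥤ PolyCat),
      -- `G` is the global sections functor: on a polynomial `∐ᵢ Fin(pᵢ, –)` it is `∏ᵢ pᵢ`
      (∀ (P : PolyCat) (I : Type) (_ : Fintype I) (p : I → FintypeCat.{0}),
        (P.obj ≅ polySum p) → Nonempty (G.obj P ≅ op (piFin p))) ∧
      -- `Y` is the Yoneda embedding `k ↦ Fin(k, –)`
      (∀ k : FintypeCat.{0},
        Nonempty ((Y.obj (op k)).obj ≅ polySum (fun _ : PUnit => k))) ∧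
      -- the adjunction `Γ ⊣ Y`, i.e. the bijection `(P ⟶ Fin(k, –)) ≃ (k → ∏ᵢ pᵢ)`
      -- natural in `P` and `k`
      Nonempty (G ⊣ Y) := by
  refine ⟨Gfunc, Yfunc, ?_, fun k => ⟨Iso.refl _⟩, ⟨adj⟩⟩
  intro P I hI p e
  have eqv : (piFin p : Type) ≃ (GammaObj P : Type) :=
    ((GammaEquiv P).trans ((Iso.homCongr e (Iso.refl (𝟭 FintypeCat))).trans
      (@sumUnitEquiv I hI p))).symm
  exact ⟨(FintypeCat.equivEquivIso eqv).op⟩
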